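/- Let t be a positive integer and let G = ⟨a, b | a^(3^(t+1)) = b^(3^t) = 1, b^(-1)ab = a^(1+3^t)⟩. Then the map sending a to a^(-2)b and b to a^(3^t - 3)b extends to an automorphism of G. -/

import Mathlib

namespace Stmt6

lemma two_mul_choose_two (n : ℕ) : 2 * n.choose 2 = n * (n - 1) := by
  induction n with
  | zero => rfl
  | succ n ih =>
    rw [Nat.choose_succ_succ, Nat.choose_one_right, Nat.mul_add, ih]
    cases n with
    | zero => rfl
    | succ m => simp only [Nat.add_sub_cancel]; ring

lemma choose_two_succ (n : ℕ) : ((n+1).choose 2 : ℤ) = n.choose 2 + n := by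
  rw [Nat.choose_succ_succ, Nat.choose_one_right]; push_cast; ring

variable {G : Type*} [Group G] {x y z : G}

lemma conj1 (hxz : Commute x z) (hyx : y * x = x * z⁻¹ * y) (d : ℤ) :
    y * x ^ d = x ^ d * z ^ (-d) * y := by
  have h : y * x * y⁻¹ = x * z⁻¹ := by rw [hyx]; group
  have h2 : y * x ^ d * y⁻¹ = x ^ d * z ^ (-d) := by
    rw [← conj_zpow, h, hxz.inv_right.mul_zpow, zpow_neg, inv_zpow]
  calc y * x ^ d = (y * x ^ d * y⁻¹) * y := by group
  _ = x ^ d * z ^ (-d) * y := by rw [h2]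

lemma conj1' (hxz : Commute x z) (hyz : Commute y z) (hyx : y * x = x * z⁻¹ * y) (d : ℤ) :
    y⁻¹ * x ^ d = x ^ d * z ^ d * y⁻¹ := by
  have h := conj1 hxz hyx d
  have h4 : x ^ d * y⁻¹ = y⁻¹ * (x ^ d * z ^ (-d)) := by
    have := congrArg (fun g => y⁻¹ * g * y⁻¹) h
    simpa [mul_assoc] using this
  calc y⁻¹ * x ^ d = y⁻¹ * (x ^ d * z ^ (-d)) * z ^ d := by group
  _ = (x ^ d * y⁻¹) * z ^ d := by rw [← h4]
  _ = x ^ d * (y⁻¹ * z ^ d) := by group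
  _ = x ^ d * (z ^ d * y⁻¹) := by rw [(hyz.inv_left.zpow_right d).eq]
  _ = x ^ d * z ^ d * y⁻¹ := by group

lemma conj' (hxz : Commute x z) (hyz : Commute y z) (hyx : y * x = x * z⁻¹ * y) (c d : ℤ) :
    y ^ c * x ^ d = x ^ d * z ^ (-(d * c)) * y ^ c := by
  have hzy' : ∀ a b : ℤ, y ^ a * z ^ b = z ^ b * y ^ a := fun a b => ((hyz.zpow_zpow a b)).eq
  induction c using Int.induction_on with
  | zero => simp
  | succ k ih =>
    calc y ^ ((k : ℤ) + 1) * x ^ d = y ^ (k : ℤ) * (y * x ^ d) := by group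
    _ = y ^ (k : ℤ) * (x ^ d * z ^ (-d) * y) := by rw [conj1 hxz hyx]
    _ = (y ^ (k : ℤ) * x ^ d) * z ^ (-d) * y := by group
    _ = (x ^ d * z ^ (-(d * k)) * y ^ (k : ℤ)) * z ^ (-d) * y := by rw [ih]
    _ = x ^ d * z ^ (-(d * k)) * (y ^ (k : ℤ) * z ^ (-d)) * y := by group
    _ = x ^ d * z ^ (-(d * k)) * (z ^ (-d) * y ^ (k : ℤ)) * y := by rw [hzy']
    _ = x ^ d * z ^ (-(d * (k + 1))) * y ^ ((k : ℤ) + 1) := by group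
  | pred k ih =>
    calc y ^ (-(k : ℤ) - 1) * x ^ d = y ^ (-(k : ℤ)) * (y⁻¹ * x ^ d) := by group
    _ = y ^ (-(k : ℤ)) * (x ^ d * z ^ d * y⁻¹) := by rw [conj1' hxz hyz hyx]
    _ = (y ^ (-(k : ℤ)) * x ^ d) * z ^ d * y⁻¹ := by group
    _ = (x ^ d * z ^ (-(d * (-k))) * y ^ (-(k : ℤ))) * z ^ d * y⁻¹ := by rw [ih]
    _ = x ^ d * z ^ (-(d * (-k))) * (y ^ (-(k : ℤ)) * z ^ d) * y⁻¹ := by group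
    _ = x ^ d * z ^ (-(d * (-k))) * (z ^ d * y ^ (-(k : ℤ))) * y⁻¹ := by rw [hzy']
    _ = x ^ d * z ^ (-(d * (-k - 1))) * y ^ (-(k : ℤ) - 1) := by group

/-- normal form -/
def NF (x y z : G) (a b c : ℤ) : G := x ^ a * z ^ b * y ^ c

lemma NF_mul (hxz : Commute x z) (hyz : Commute y z) (hyx : y * x = x * z⁻¹ * y)
    (a b c d e f : ℤ) :
    NF x y z a b c * NF x y z d e f = NF x y z (a + d) (b + e - d * c) (c + f) := by
  have hzx' : ∀ a b : ℤ, z ^ a * x ^ b = x ^ b * z ^ a := fun a b => ((hxz.zpow_zpow b a)).symm.eq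
  have hzy' : ∀ a b : ℤ, y ^ a * z ^ b = z ^ b * y ^ a := fun a b => ((hyz.zpow_zpow a b)).eq
  unfold NF
  calc x ^ a * z ^ b * y ^ c * (x ^ d * z ^ e * y ^ f)
      = x ^ a * z ^ b * (y ^ c * x ^ d) * z ^ e * y ^ f := by group
    _ = x ^ a * z ^ b * (x ^ d * z ^ (-(d * c)) * y ^ c) * z ^ e * y ^ f := by
        rw [conj' hxz hyz hyx]
    _ = x ^ a * (z ^ b * x ^ d) * z ^ (-(d * c)) * (y ^ c * z ^ e) * y ^ f := by group
    _ = x ^ a * (x ^ d * z ^ b) * z ^ (-(d * c)) * (z ^ e * y ^ c) * y ^ f := by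
        rw [hzx', hzy']
    _ = x ^ (a + d) * z ^ (b + e - d * c) * y ^ (c + f) := by group

lemma NF_pow (hxz : Commute x z) (hyz : Commute y z) (hyx : y * x = x * z⁻¹ * y)
    (a b c : ℤ) (n : ℕ) :
    NF x y z a b c ^ n = NF x y z (a * n) (b * n - a * c * n.choose 2) (c * n) := by
  induction n with
  | zero => simp [NF]
  | succ n ih =>
    rw [pow_succ, ih, NF_mul hxz hyz hyx]
    congr 1
    · push_cast; ring
    · rw [choose_two_succ]; push_cast; ring
    · push_cast; ring

lemma NF_one : NF x y z 0 0 0 = 1 := by simp [NF]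

lemma NF_inv (hxz : Commute x z) (hyz : Commute y z) (hyx : y * x = x * z⁻¹ * y)
    (a b c : ℤ) :
    (NF x y z a b c)⁻¹ = NF x y z (-a) (-b - a * c) (-c) := by
  apply inv_eq_of_mul_eq_one_right
  rw [NF_mul hxz hyz hyx, show a + -a = (0:ℤ) by ring,
    show b + (-b - a * c) - -a * c = (0:ℤ) by ring, show c + -c = (0:ℤ) by ring]
  exact NF_one

end Stmt6

namespace Stmt6b
open Stmt6
variable {G : Type*} [Group G] {x y z : G}

lemma NF_eq (hxz : Commute x z) (hyz : Commute y z) (hyx : y * x = x * z⁻¹ * y)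
    (T : ℕ) (hzT : x ^ T = z) (hyT : y ^ T = 1) (hz3 : z ^ 3 = 1)
    {a b c a' b' c' : ℤ} (q r s : ℤ) (ha : a = a' + T * q) (hc : c = c' + T * r)
    (hb : b + q = b' + 3 * s) :
    NF x y z a b c = NF x y z a' b' c' := by
  have hx1 : x ^ ((T:ℤ) * q) = z ^ q := by
    rw [zpow_mul, zpow_natCast, hzT]
  have hy1 : y ^ ((T:ℤ) * r) = (1 : G) := by
    rw [zpow_mul, zpow_natCast, hyT, one_zpow]
  have hz1 : z ^ ((3:ℤ) * s) = (1 : G) := by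
    rw [zpow_mul, show ((3:ℤ)) = ((3:ℕ):ℤ) by norm_num, zpow_natCast, hz3, one_zpow]
  unfold NF
  rw [ha, hc, zpow_add, zpow_add, hx1, hy1]
  have hzx' : ∀ i j : ℤ, z ^ i * x ^ j = x ^ j * z ^ i :=
    fun i j => ((hxz.zpow_zpow j i)).symm.eq
  calc x ^ a' * z ^ q * z ^ b * (y ^ c' * 1) = x ^ a' * z ^ (b + q) * y ^ c' := by group
  _ = x ^ a' * z ^ (b' + 3 * s) * y ^ c' := by rw [hb]
  _ = x ^ a' * (z ^ b' * z ^ ((3:ℤ) * s)) * y ^ c' := by rw [← zpow_add]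
  _ = x ^ a' * z ^ b' * y ^ c' := by rw [hz1, mul_one]

lemma NF_eq_one (hxz : Commute x z) (hyz : Commute y z) (hyx : y * x = x * z⁻¹ * y)
    (T : ℕ) (hzT : x ^ T = z) (hyT : y ^ T = 1) (hz3 : z ^ 3 = 1)
    {a b c : ℤ} (q r s : ℤ) (ha : a = T * q) (hc : c = T * r)
    (hb : b + q = 3 * s) :
    NF x y z a b c = 1 :=
  (NF_eq hxz hyz hyx T hzT hyT hz3 q r s (by simpa using ha) (by simpa using hc)
    (by simpa using hb)).trans NF_one

lemma NF_mul_base (hxz : Commute x z) (hyz : Commute y z) (hyx : y * x = x * z⁻¹ * y)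
    (a b c : ℤ) : NF x y z a b c * x = NF x y z (a + 1) (b - c) c := by
  have h := NF_mul hxz hyz hyx a b c 1 0 0
  rw [show NF x y z 1 0 0 = x by simp [NF]] at h
  simpa using h

lemma choose2_dvd (n : ℕ) (h : 3 ∣ n) : 3 ∣ n.choose 2 := by
  obtain ⟨k, hk⟩ := h
  have h2 : 2 * n.choose 2 = 3 * (k * (n - 1)) := by
    rw [two_mul_choose_two, hk]; ring
  omega

end Stmt6b


open Stmt6 Stmt6b

/-- Relations for the group `⟨a, b | a^(3^(t+1)) = b^(3^t) = 1, b⁻¹ab = a^(1+3^t)⟩`,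
with generator `0` playing the role of `a` and `1` the role of `b`. -/
def gRels (t : ℕ) : Set (FreeGroup (Fin 2)) :=
  { FreeGroup.of 0 ^ 3 ^ (t + 1), FreeGroup.of 1 ^ 3 ^ t,
    (FreeGroup.of 1)⁻¹ * FreeGroup.of 0 * FreeGroup.of 1 *
      (FreeGroup.of 0 ^ (1 + 3 ^ t))⁻¹ }

theorem stmt_6 (t : ℕ) (ht : 0 < t) :
    ∃ φ : PresentedGroup (gRels t) ≃* PresentedGroup (gRels t),
      φ (PresentedGroup.of 0) =
          (PresentedGroup.of 0 : PresentedGroup (gRels t)) ^ (-2 : ℤ) *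
            PresentedGroup.of 1 ∧
      φ (PresentedGroup.of 1) =
          (PresentedGroup.of 0 : PresentedGroup (gRels t)) ^ (3 ^ t - 3) *
            PresentedGroup.of 1 := by
  set X : PresentedGroup (gRels t) := PresentedGroup.of 0 with hXdef
  set Y : PresentedGroup (gRels t) := PresentedGroup.of 1 with hYdef
  have hrel : ∀ r ∈ gRels t, (PresentedGroup.mk (gRels t) r) = 1 := fun r hr =>
    (QuotientGroup.eq_one_iff _).mpr (Subgroup.subset_normalClosure hr)
  have hx : X ^ (3 ^ (t+1)) = 1 := by
    have := hrel _ (Set.mem_insert _ _)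
    rw [map_pow] at this; exact this
  have hy : Y ^ (3 ^ t) = 1 := by
    have := hrel _ (Set.mem_insert_of_mem _ (Set.mem_insert _ _))
    rw [map_pow] at this; exact this
  have hc2 : Y⁻¹ * X * Y = X ^ (1 + 3 ^ t) := by
    have := hrel _ (Set.mem_insert_of_mem _ (Set.mem_insert_of_mem _ rfl))
    simp only [map_mul, map_inv, map_pow] at this
    rw [mul_inv_eq_one] at this
    exact this
  set z : PresentedGroup (gRels t) := X ^ (3 ^ t) with hzdef
  have h33 : 3 ≤ 3 ^ t := by
    calc 3 = 3 ^ 1 := by norm_num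
    _ ≤ 3 ^ t := Nat.pow_le_pow_right (by norm_num) ht
  have hz3 : z ^ 3 = 1 := by
    rw [hzdef, ← pow_mul, ← pow_succ, hx]
  have hxz : Commute X z := (Commute.refl X).pow_right _
  have hyz : Commute Y z := by
    have h2t : X ^ (3 ^ t * 3 ^ t) = 1 := by
      rw [show 3 ^ t * 3 ^ t = 3 ^ (t+1) * 3 ^ (t-1) by
        rw [← pow_add, ← pow_add]; congr 1; omega, pow_mul, hx, one_pow]
    have h1 : Y⁻¹ * z * Y = z := by
      calc Y⁻¹ * z * Y = (Y⁻¹ * X * Y⁻¹⁻¹) ^ (3 ^ t) := by rw [conj_pow, inv_inv, ← hzdef]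
      _ = (X ^ (1 + 3 ^ t)) ^ (3 ^ t) := by rw [inv_inv, hc2]
      _ = z * X ^ (3 ^ t * 3 ^ t) := by rw [← pow_mul, add_mul, pow_add, one_mul, hzdef]
      _ = z := by rw [h2t, mul_one]
    have : z * Y = Y * z := by
      calc z * Y = Y * (Y⁻¹ * z * Y) := by group
      _ = Y * z := by rw [h1]
    exact this.symm
  have hcz : Y⁻¹ * X * Y = X * z := by
    rw [hc2, pow_add, pow_one, hzdef]
  have hyx : Y * X = X * z⁻¹ * Y := by
    have h5 : X * z⁻¹ = Y * X * Y⁻¹ := by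
      calc X * z⁻¹ = Y * (Y⁻¹ * X * Y) * (Y⁻¹ * z⁻¹) := by group
      _ = Y * (X * z) * (z⁻¹ * Y⁻¹) := by rw [hcz, (hyz.inv_inv).eq]
      _ = Y * X * Y⁻¹ := by group
    calc Y * X = (Y * X * Y⁻¹) * Y := by group
    _ = X * z⁻¹ * Y := by rw [← h5]
  have hinv : Y⁻¹ * X = X * z * Y⁻¹ := by
    calc Y⁻¹ * X = (Y⁻¹ * X * Y) * Y⁻¹ := by group
    _ = X * z * Y⁻¹ := by rw [hcz]
  -- NF value lemmas
  have hX' : NF X Y z 1 0 0 = X := by simp [NF]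
  have hY' : NF X Y z 0 0 1 = Y := by simp [NF]
  have hf0 : X ^ (-2:ℤ) * Y = NF X Y z (-2) 0 1 := by simp [NF]
  have hf1 : X ^ (3 ^ t - 3 : ℕ) * Y = NF X Y z ((3 ^ t - 3 : ℕ) : ℤ) 0 1 := by
    simp [NF, zpow_natCast]
  have hg0 : Y⁻¹ * X = NF X Y z 1 1 (-1) := by
    rw [hinv]; simp [NF]
  have hg1 : (Y⁻¹ * X) ^ 2 * X = NF X Y z 3 5 (-2) := by
    rw [hg0, NF_pow hxz hyz hyx, NF_mul_base hxz hyz hyx]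
    norm_num [Nat.choose_self]
  -- arithmetic facts
  have hu : (3:ℤ) ^ t = 3 * 3 ^ (t - 1) := by
    rw [← pow_succ']; congr 1; omega
  have hup : (3:ℕ) ^ t = 3 * 3 ^ (t - 1) := by
    rw [← pow_succ']; congr 1; omega
  have hM : ((3 ^ t - 3 : ℕ) : ℤ) = 3 ^ t - 3 := by
    rw [Nat.cast_sub h33]; push_cast; ring
  have hN1 : ((3 ^ t - 1 : ℕ) : ℤ) = 3 ^ t - 1 := by
    rw [Nat.cast_sub (by omega)]; push_cast; ring
  obtain ⟨c1, hc1⟩ : ∃ c1 : ℤ, ((3 ^ (t+1)).choose 2 : ℤ) = 3 * c1 := by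
    obtain ⟨k, hk⟩ := choose2_dvd (3 ^ (t+1)) (dvd_pow_self 3 (Nat.succ_ne_zero t))
    exact ⟨(k : ℤ), by omega⟩
  obtain ⟨c2, hc2'⟩ : ∃ c2 : ℤ, ((3 ^ t).choose 2 : ℤ) = 3 * c2 := by
    obtain ⟨k, hk⟩ := choose2_dvd (3 ^ t) (dvd_pow_self 3 (by omega))
    exact ⟨(k : ℤ), by omega⟩
  obtain ⟨c3, hc3⟩ : ∃ c3 : ℤ, ((1 + 3 ^ t).choose 2 : ℤ) = 3 * c3 := by
    have e2 : 2 * (1 + 3 ^ t).choose 2 = 3 * ((1 + 3 ^ t) * 3 ^ (t-1)) := by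
      rw [two_mul_choose_two, show (1 + 3 ^ t) - 1 = 3 ^ t by omega, hup]; ring
    have : (3:ℕ) ∣ (1 + 3 ^ t).choose 2 := by omega
    obtain ⟨k, hk⟩ := this
    exact ⟨(k : ℤ), by omega⟩
  obtain ⟨c4, hc4⟩ : ∃ c4 : ℤ, ((3 ^ t - 1).choose 2 : ℤ) = 3 * c4 + 1 := by
    have hq : 1 ≤ (3:ℕ) ^ (t - 1) := Nat.one_le_pow _ _ (by norm_num)
    have e4 : 2 * (3 ^ t - 1).choose 2 =
        3 * (3 * (3 ^ (t-1) - 1) * (3 ^ (t-1) - 1) + 3 * (3 ^ (t-1) - 1)) + 2 := by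
      rw [two_mul_choose_two,
        show 3 ^ t - 1 = 3 * (3 ^ (t-1) - 1) + 2 by omega,
        show 3 * (3 ^ (t-1) - 1) + 2 - 1 = 3 * (3 ^ (t-1) - 1) + 1 by omega]
      ring
    have : (3 ^ t - 1).choose 2 % 3 = 1 := by omega
    exact ⟨((3 ^ t - 1).choose 2 / 3 : ℕ), by push_cast; omega⟩
  -- the forward homomorphism
  have hφ : ∀ r ∈ gRels t,
      (FreeGroup.lift ![X ^ (-2:ℤ) * Y, X ^ (3 ^ t - 3 : ℕ) * Y]) r = 1 := by
    intro r hr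
    simp only [gRels, Set.mem_insert_iff, Set.mem_singleton_iff] at hr
    rcases hr with rfl | rfl | rfl
    · rw [map_pow, FreeGroup.lift_apply_of]
      show (X ^ (-2:ℤ) * Y) ^ 3 ^ (t+1) = 1
      rw [hf0, NF_pow hxz hyz hyx]
      refine NF_eq_one hxz hyz hyx (3 ^ t) hzdef.symm hy hz3 (-6) 3 (2 * c1 - 2) ?_ ?_ ?_
      · push_cast [pow_succ]; ring
      · push_cast [pow_succ]; ring
      · rw [hc1]; push_cast; ring
    · rw [map_pow, FreeGroup.lift_apply_of]
      show (X ^ (3 ^ t - 3 : ℕ) * Y) ^ 3 ^ t = 1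
      rw [hf1, NF_pow hxz hyz hyx]
      refine NF_eq_one hxz hyz hyx (3 ^ t) hzdef.symm hy hz3 ((3:ℤ) ^ t - 3) 1
        (-((3 ^ t - 3) * c2) + (3 ^ (t-1) - 1)) ?_ ?_ ?_
      · rw [hM]; push_cast; ring
      · push_cast; ring
      · rw [hM, hc2']; push_cast; rw [hu]; ring
    · simp only [map_mul, map_inv, map_pow, FreeGroup.lift_apply_of]
      show (X ^ (3 ^ t - 3 : ℕ) * Y)⁻¹ * (X ^ (-2:ℤ) * Y) * (X ^ (3 ^ t - 3 : ℕ) * Y) *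
        ((X ^ (-2:ℤ) * Y) ^ (1 + 3 ^ t))⁻¹ = 1
      rw [hf0, hf1, NF_pow hxz hyz hyx, NF_inv hxz hyz hyx, NF_inv hxz hyz hyx,
        NF_mul hxz hyz hyx, NF_mul hxz hyz hyx, NF_mul hxz hyz hyx]
      refine NF_eq_one hxz hyz hyx (3 ^ t) hzdef.symm hy hz3 2 (-1)
        (1 + 3 ^ (t-1) + 6 * (3 ^ (t-1) * 3 ^ (t-1)) - 2 * c3) ?_ ?_ ?_
      · push_cast; ring
      · push_cast; ring
      · rw [hM, hc3]; push_cast; rw [hu]; ring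
  -- the inverse homomorphism
  have hψ : ∀ r ∈ gRels t,
      (FreeGroup.lift ![Y⁻¹ * X, (Y⁻¹ * X) ^ 2 * X]) r = 1 := by
    intro r hr
    simp only [gRels, Set.mem_insert_iff, Set.mem_singleton_iff] at hr
    rcases hr with rfl | rfl | rfl
    · rw [map_pow, FreeGroup.lift_apply_of]
      show (Y⁻¹ * X) ^ 3 ^ (t+1) = 1
      rw [hg0, NF_pow hxz hyz hyx]
      refine NF_eq_one hxz hyz hyx (3 ^ t) hzdef.symm hy hz3 3 (-3) (3 ^ t + c1 + 1) ?_ ?_ ?_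
      · push_cast [pow_succ]; ring
      · push_cast [pow_succ]; ring
      · rw [hc1]; push_cast [pow_succ]; ring
    · rw [map_pow, FreeGroup.lift_apply_of]
      show ((Y⁻¹ * X) ^ 2 * X) ^ 3 ^ t = 1
      rw [hg1, NF_pow hxz hyz hyx]
      refine NF_eq_one hxz hyz hyx (3 ^ t) hzdef.symm hy hz3 3 (-2)
        (5 * 3 ^ (t-1) + 2 * ((3 ^ t).choose 2 : ℤ) + 1) ?_ ?_ ?_
      · push_cast; ring
      · push_cast; ring
      · push_cast; rw [hu]; ring
    · simp only [map_mul, map_inv, map_pow, FreeGroup.lift_apply_of]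
      show ((Y⁻¹ * X) ^ 2 * X)⁻¹ * (Y⁻¹ * X) * ((Y⁻¹ * X) ^ 2 * X) *
        ((Y⁻¹ * X) ^ (1 + 3 ^ t))⁻¹ = 1
      rw [hg1, hg0, NF_pow hxz hyz hyx, NF_inv hxz hyz hyx, NF_inv hxz hyz hyx,
        NF_mul hxz hyz hyx, NF_mul hxz hyz hyx, NF_mul hxz hyz hyx]
      refine NF_eq_one hxz hyz hyx (3 ^ t) hzdef.symm hy hz3 (-1) 1
        (3 * (3 ^ (t-1) * 3 ^ (t-1)) - c3) ?_ ?_ ?_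
      · push_cast; ring
      · push_cast; ring
      · rw [hc3]; push_cast; rw [hu]; ring
  set Φ : PresentedGroup (gRels t) →* PresentedGroup (gRels t) :=
    PresentedGroup.toGroup hφ with hΦdef
  set Ψ : PresentedGroup (gRels t) →* PresentedGroup (gRels t) :=
    PresentedGroup.toGroup hψ with hΨdef
  have hΦX : Φ X = X ^ (-2:ℤ) * Y := PresentedGroup.toGroup.of hφ (x := 0)
  have hΦY : Φ Y = X ^ (3 ^ t - 3 : ℕ) * Y := PresentedGroup.toGroup.of hφ (x := 1)
  have hΨX : Ψ X = Y⁻¹ * X := PresentedGroup.toGroup.of hψ (x := 0)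
  have hΨY : Ψ Y = (Y⁻¹ * X) ^ 2 * X := PresentedGroup.toGroup.of hψ (x := 1)
  have hcore : (X ^ (3 ^ t - 3 : ℕ) * Y)⁻¹ * (X ^ (-2:ℤ) * Y) = X := by
    rw [hf0, hf1, NF_inv hxz hyz hyx, NF_mul hxz hyz hyx]
    refine (NF_eq hxz hyz hyx (3 ^ t) hzdef.symm hy hz3 (-1) 0 (-(3:ℤ) ^ (t-1))
      ?_ ?_ ?_).trans hX'
    · rw [hM]; push_cast; ring
    · push_cast; ring
    · rw [hM]; push_cast; rw [hu]; ring
  have h1 : Ψ.comp Φ = MonoidHom.id _ := by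
    refine PresentedGroup.ext fun i => ?_
    fin_cases i
    · show Ψ (Φ X) = X
      rw [hΦX, map_mul, map_zpow, hΨX, hΨY]
      group
    · show Ψ (Φ Y) = Y
      rw [hΦY, map_mul, map_pow, hΨX, hΨY, ← mul_assoc, ← pow_add,
        show 3 ^ t - 3 + 2 = 3 ^ t - 1 by omega, hg0, NF_pow hxz hyz hyx,
        NF_mul_base hxz hyz hyx]
      refine (NF_eq hxz hyz hyx (3 ^ t) hzdef.symm hy hz3 1 (-1)
        (2 * 3 ^ (t-1) + c4) ?_ ?_ ?_).trans hY'
      · rw [hN1]; push_cast; ring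
      · rw [hN1]; push_cast; ring
      · rw [hN1, hc4]; push_cast; rw [hu]; ring
  have h2 : Φ.comp Ψ = MonoidHom.id _ := by
    refine PresentedGroup.ext fun i => ?_
    fin_cases i
    · show Φ (Ψ X) = X
      rw [hΨX, map_mul, map_inv, hΦX, hΦY, hcore]
    · show Φ (Ψ Y) = Y
      rw [hΨY, map_mul, map_pow, map_mul, map_inv, hΦX, hΦY, hcore]
      group
  refine ⟨MonoidHom.toMulEquiv Φ Ψ h1 h2, ?_, ?_⟩
  · exact hΦX
  · exact hΦY
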